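/- The subgroup of GL(2,ℂ) generated by the two matrices a = i·[[1,0],[0,−1]] and b = (i/2)·[[−1,−√3],[−√3,1]] is a finite group of order 12. -/

import Mathlib

open Matrix Complex

noncomputable section

/-- a = i·[[1,0],[0,−1]]. -/
def ma : Matrix (Fin 2) (Fin 2) ℂ := Complex.I • !![1, 0; 0, -1]

/-- b = (i/2)·[[−1,−√3],[−√3,1]]. -/
def mb : Matrix (Fin 2) (Fin 2) ℂ :=
  (Complex.I / 2) • !![-1, -(Real.sqrt 3 : ℂ); -(Real.sqrt 3 : ℂ), 1]

lemma s3sq' : (Real.sqrt 3 : ℂ) ^ 2 = 3 := by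
  rw [← Complex.ofReal_pow, Real.sq_sqrt (by norm_num)]; norm_num

lemma s3cube' : (Real.sqrt 3 : ℂ) ^ 3 = 3 * (Real.sqrt 3 : ℂ) := by
  rw [pow_succ, s3sq']

lemma ma_sq : ma * ma = -1 := by
  ext i j
  fin_cases i <;> fin_cases j <;>
    simp [ma, mb, Matrix.mul_apply, Fin.sum_univ_two] <;>
    (try ring_nf) <;> (try simp only [Complex.I_sq, s3sq', s3cube']) <;> (try ring) <;>
    (try norm_num)

lemma mb_sq : mb * mb = -1 := by
  ext i j
  fin_cases i <;> fin_cases j <;>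
    simp [ma, mb, Matrix.mul_apply, Fin.sum_univ_two] <;>
    (try ring_nf) <;> (try simp only [Complex.I_sq, s3sq', s3cube']) <;> (try ring) <;>
    (try norm_num)

lemma mx_eq : ma * mb = !![1/2, (Real.sqrt 3:ℂ)/2; -((Real.sqrt 3:ℂ)/2), 1/2] := by
  ext i j
  fin_cases i <;> fin_cases j <;>
    simp [ma, mb, Matrix.mul_apply, Fin.sum_univ_two] <;>
    (try ring_nf) <;> (try simp only [Complex.I_sq, s3sq', s3cube']) <;> (try ring) <;>
    (try norm_num)

lemma mx_sq_eq :
    (ma*mb) * (ma*mb) = !![-(1/2), (Real.sqrt 3:ℂ)/2; -((Real.sqrt 3:ℂ)/2), -(1/2)] := by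
  rw [mx_eq]
  ext i j
  fin_cases i <;> fin_cases j <;>
    simp [Matrix.mul_apply, Fin.sum_univ_two] <;>
    (try ring_nf) <;> (try simp only [Complex.I_sq, s3sq', s3cube']) <;> (try ring) <;>
    (try norm_num)

lemma mx_cube : (ma*mb) * ((ma*mb) * (ma*mb)) = -1 := by
  conv_lhs => rw [mx_sq_eq, mx_eq]
  ext i j
  fin_cases i <;> fin_cases j <;>
    simp [Matrix.mul_apply, Fin.sum_univ_two] <;>
    (try ring_nf) <;> (try simp only [Complex.I_sq, s3sq', s3cube']) <;> (try ring) <;>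
    (try norm_num)

lemma sqrt3_ne' : (Real.sqrt 3 : ℂ) ≠ 0 := by
  simp [Complex.ofReal_eq_zero]

lemma mx_ne_one : ma * mb ≠ 1 := by
  rw [mx_eq]
  intro h
  have h2 := congrFun (congrFun h 0) 1
  simp [Matrix.one_apply, sqrt3_ne'] at h2

lemma mx_sq_ne_one : (ma*mb) * (ma*mb) ≠ 1 := by
  rw [mx_sq_eq]
  intro h
  have h2 := congrFun (congrFun h 0) 1
  simp [Matrix.one_apply, sqrt3_ne'] at h2

lemma mneg_one_ne_one : (-1 : Matrix (Fin 2) (Fin 2) ℂ) ≠ 1 := by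
  intro h
  have h2 := congrFun (congrFun h 0) 0
  simp [Matrix.one_apply] at h2
  norm_num at h2

set_option maxHeartbeats 2000000 in
/-- The subgroup of GL(2,ℂ) generated by a and b is a finite group of order 12. -/
theorem stmt7 (a b : GL (Fin 2) ℂ)
    (ha : (a : Matrix (Fin 2) (Fin 2) ℂ) = ma)
    (hb : (b : Matrix (Fin 2) (Fin 2) ℂ) = mb) :
    Nat.card (Subgroup.closure ({a, b} : Set (GL (Fin 2) ℂ))) = 12 := by
  -- GL-level relations
  have hA : a * a = -1 := by
    apply Units.ext
    simp only [Units.val_mul, ha, Units.val_neg, Units.val_one, ma_sq]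
  have hB : b * b = -1 := by
    apply Units.ext
    simp only [Units.val_mul, hb, Units.val_neg, Units.val_one, mb_sq]
  have hX : (a * b) * ((a * b) * (a * b)) = -1 := by
    apply Units.ext
    simp only [Units.val_mul, ha, hb, Units.val_neg, Units.val_one, mx_cube]
  have hne : (-1 : GL (Fin 2) ℂ) ≠ 1 := by
    intro h
    exact mneg_one_ne_one (by simpa using congrArg Units.val h)
  have haneq : a ≠ 1 := fun h => hne (by rw [← hA, h, one_mul])
  have hxneq : a * b ≠ 1 := by
    intro h
    exact mx_ne_one (by have := congrArg Units.val h; simpa [ha, hb] using this)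
  have hx2neq : (a * b) * (a * b) ≠ 1 := by
    intro h
    exact mx_sq_ne_one (by have := congrArg Units.val h; simpa [ha, hb] using this)
  obtain ⟨x, hxdef⟩ : ∃ x, x = a * b := ⟨_, rfl⟩
  rw [← hxdef] at hX hxneq hx2neq
  -- inverses and rewriting kit
  have kai : a⁻¹ = -a := inv_eq_of_mul_eq_one_right (by rw [mul_neg, hA, neg_neg])
  have kbi : b⁻¹ = -b := inv_eq_of_mul_eq_one_right (by rw [mul_neg, hB, neg_neg])
  have kxi : x⁻¹ = -(x * x) := inv_eq_of_mul_eq_one_right (by rw [mul_neg, hX, neg_neg])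
  have k0 : b = -(a * x) := by
    rw [hxdef, ← mul_assoc, hA, neg_one_mul, neg_neg]
  have kbi' : b⁻¹ = a * x := by rw [kbi, k0, neg_neg]
  have k2 : x * a = -(a * (x * x)) := by
    have h1 : x⁻¹ = b * a := by rw [hxdef, _root_.mul_inv_rev, kai, kbi, neg_mul_neg]
    calc x * a = a * (b * a) := by rw [hxdef, mul_assoc]
    _ = a * x⁻¹ := by rw [h1]
    _ = -(a * (x * x)) := by rw [kxi, mul_neg]
  have k1 : ∀ t : GL (Fin 2) ℂ, x * (a * t) = -(a * (x * (x * t))) := by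
    intro t
    rw [← mul_assoc, k2, neg_mul, mul_assoc, mul_assoc]
  have k3 : ∀ t : GL (Fin 2) ℂ, a * (a * t) = -t := by
    intro t
    rw [← mul_assoc, hA, neg_one_mul]
  have k5 : ∀ t : GL (Fin 2) ℂ, x * (x * (x * t)) = -t := by
    intro t
    rw [← mul_assoc, ← mul_assoc, mul_assoc x x x, hX, neg_one_mul]
  -- the 12-element set
  obtain ⟨S, hS⟩ : ∃ S : Set (GL (Fin 2) ℂ),
      S = {1, x, x*x, -1, -x, -(x*x), a, a*x, a*(x*x), -a, -(a*x), -(a*(x*x))} := ⟨_, rfl⟩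
  have hmem : ∀ g ∈ Subgroup.closure ({a, b} : Set (GL (Fin 2) ℂ)), g ∈ S := by
    intro g hg
    refine Subgroup.closure_induction_right (p := fun g _ => g ∈ S) ?_ ?_ ?_ hg
    · simp [hS]
    · intro g hg' y hy hgS
      simp only [hS, Set.mem_insert_iff, Set.mem_singleton_iff] at hy hgS
      rcases hy with rfl | rfl <;>
      rcases hgS with rfl | rfl | rfl | rfl | rfl | rfl | rfl | rfl | rfl | rfl | rfl | rfl <;>
      simp only [hS, k0, mul_neg, neg_mul, neg_neg, one_mul, mul_one, mul_assoc, k1, k2, k3, k5,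
        hA, hX, Set.mem_insert_iff, Set.mem_singleton_iff] <;>
      tauto
    · intro g hg' y hy hgS
      simp only [hS, Set.mem_insert_iff, Set.mem_singleton_iff] at hy hgS
      rcases hy with rfl | rfl <;>
      rcases hgS with rfl | rfl | rfl | rfl | rfl | rfl | rfl | rfl | rfl | rfl | rfl | rfl <;>
      simp only [hS, kai, kbi', mul_neg, neg_mul, neg_neg, one_mul, mul_one, mul_assoc,
        k1, k2, k3, k5, hA, hX, Set.mem_insert_iff, Set.mem_singleton_iff] <;>
      tauto
  have hsub : ((Subgroup.closure ({a, b} : Set (GL (Fin 2) ℂ))) : Set (GL (Fin 2) ℂ)) ⊆ S :=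
    fun g hg => hmem g hg
  have hSfin : S.Finite := by
    rw [hS]
    refine Set.Finite.insert _ <| Set.Finite.insert _ <| Set.Finite.insert _ <|
      Set.Finite.insert _ <| Set.Finite.insert _ <| Set.Finite.insert _ <|
      Set.Finite.insert _ <| Set.Finite.insert _ <| Set.Finite.insert _ <|
      Set.Finite.insert _ <| Set.Finite.insert _ <| Set.finite_singleton _
  have hfin : ((Subgroup.closure ({a, b} : Set (GL (Fin 2) ℂ))) : Set (GL (Fin 2) ℂ)).Finite :=
    hSfin.subset hsub
  have hcard : Nat.card (Subgroup.closure ({a, b} : Set (GL (Fin 2) ℂ))) =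
      Set.ncard ((Subgroup.closure ({a, b} : Set (GL (Fin 2) ℂ))) : Set (GL (Fin 2) ℂ)) :=
    Nat.card_coe_set_eq _
  have step : ∀ (u : GL (Fin 2) ℂ) (s : Set (GL (Fin 2) ℂ)) (k : ℕ),
      s.ncard ≤ k → (insert u s).ncard ≤ k + 1 :=
    fun u s k h => (Set.ncard_insert_le u s).trans (by omega)
  have hS12 : S.ncard ≤ 12 := by
    rw [hS]
    refine step _ _ 11 <| step _ _ 10 <| step _ _ 9 <| step _ _ 8 <| step _ _ 7 <|
      step _ _ 6 <| step _ _ 5 <| step _ _ 4 <| step _ _ 3 <| step _ _ 2 <|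
      step _ _ 1 ?_
    simp [Set.ncard_singleton]
  have hle : Nat.card (Subgroup.closure ({a, b} : Set (GL (Fin 2) ℂ))) ≤ 12 := by
    rw [hcard]
    exact (Set.ncard_le_ncard hsub hSfin).trans hS12
  -- order of a is 4
  have horda : orderOf a = 4 := by
    have hpow : a ^ 4 = 1 := by
      rw [show (4:ℕ) = 2+2 from rfl, pow_add, pow_two, hA, neg_one_mul, neg_neg]
    have hdvd := orderOf_dvd_of_pow_eq_one hpow
    have hdd : orderOf a ∈ Nat.divisors 4 := Nat.mem_divisors.mpr ⟨hdvd, by norm_num⟩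
    rw [show Nat.divisors 4 = {1, 2, 4} from by decide] at hdd
    simp only [Finset.mem_insert, Finset.mem_singleton] at hdd
    rcases hdd with h | h | h
    · exact absurd (orderOf_eq_one_iff.mp h) haneq
    · exfalso
      have hp := pow_orderOf_eq_one a
      rw [h, pow_two, hA] at hp
      exact hne hp
    · exact h
  -- order of x is 6
  have hordx : orderOf x = 6 := by
    have hx3 : x ^ 3 = -1 := by rw [show (3:ℕ) = 1+2 from rfl, pow_add, pow_one, pow_two, hX]
    have hpow : x ^ 6 = 1 := by
      rw [show (6:ℕ) = 3*2 from rfl, pow_mul, hx3, pow_two, neg_one_mul, neg_neg]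
    have hdvd := orderOf_dvd_of_pow_eq_one hpow
    have hdd : orderOf x ∈ Nat.divisors 6 := Nat.mem_divisors.mpr ⟨hdvd, by norm_num⟩
    rw [show Nat.divisors 6 = {1, 2, 3, 6} from by decide] at hdd
    simp only [Finset.mem_insert, Finset.mem_singleton] at hdd
    rcases hdd with h | h | h | h
    · exact absurd (orderOf_eq_one_iff.mp h) hxneq
    · exfalso
      have hp := pow_orderOf_eq_one x
      rw [h, pow_two] at hp
      exact hx2neq hp
    · exfalso
      have hp := pow_orderOf_eq_one x
      rw [h, hx3] at hp
      exact hne hp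
    · exact h
  have hamem : a ∈ Subgroup.closure ({a, b} : Set (GL (Fin 2) ℂ)) :=
    Subgroup.subset_closure (by simp)
  have hbmem : b ∈ Subgroup.closure ({a, b} : Set (GL (Fin 2) ℂ)) :=
    Subgroup.subset_closure (by simp)
  have hxmem : x ∈ Subgroup.closure ({a, b} : Set (GL (Fin 2) ℂ)) := by
    rw [hxdef]; exact mul_mem hamem hbmem
  have hda : 4 ∣ Nat.card (Subgroup.closure ({a, b} : Set (GL (Fin 2) ℂ))) :=
    horda ▸ Subgroup.orderOf_dvd_natCard _ hamem
  have hdx : 6 ∣ Nat.card (Subgroup.closure ({a, b} : Set (GL (Fin 2) ℂ))) :=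
    hordx ▸ Subgroup.orderOf_dvd_natCard _ hxmem
  have hd12 : 12 ∣ Nat.card (Subgroup.closure ({a, b} : Set (GL (Fin 2) ℂ))) := by
    have := Nat.lcm_dvd hda hdx
    simpa [show Nat.lcm 4 6 = 12 by norm_num] using this
  have hpos : 0 < Nat.card (Subgroup.closure ({a, b} : Set (GL (Fin 2) ℂ))) := by
    rw [hcard]
    exact (Set.ncard_pos hfin).mpr ⟨1, Subgroup.one_mem _⟩
  have := Nat.le_of_dvd hpos hd12
  omega
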